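/- Let d be a positive integer, 0 ≤ r < 1, and n a positive integer. If X_1, …, X_n and Y are drawn independently from the uniform distribution on the spherical layer B_d \ rB_d, then the probability that Y does not belong to the convex hull of {X_1, …, X_n} is greater than 1 − n/2^d. Equivalently, with respect to the (n+1)-fold product of the uniform probability measure on B_d \ rB_d, the set of tuples (X_1, …, X_n, Y) with Y ∈ conv(X_1, …, X_n) has measure less than n/2^d. -/

import Mathlib

open MeasureTheory Metric ENNReal Set

lemma sz_ball_eq (d : ℕ) (x : EuclideanSpace ℝ (Fin d)) :
    {y : EuclideanSpace ℝ (Fin d) | ‖y‖^2 ≤ (inner ℝ x y : ℝ)} =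
      closedBall ((2:ℝ)⁻¹ • x) (‖x‖/2) := by
  ext y
  have hsq : ‖y - (2:ℝ)⁻¹ • x‖^2 = ‖y‖^2 - (inner ℝ x y : ℝ) + (2⁻¹ * ‖x‖)^2 := by
    rw [norm_sub_sq_real, real_inner_smul_right, norm_smul, real_inner_comm]
    simp [Real.norm_eq_abs]
  simp only [mem_setOf_eq, mem_closedBall, dist_eq_norm]
  rw [← pow_le_pow_iff_left₀ (norm_nonneg _) (by positivity : (0:ℝ) ≤ ‖x‖/2) (two_ne_zero), hsq]
  constructor <;> intro h <;> nlinarith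

lemma sz_vol_cb (d : ℕ) (c : EuclideanSpace ℝ (Fin d)) {s : ℝ} (hs : 0 ≤ s) :
    volume (closedBall c s) =
      ENNReal.ofReal (s ^ d) * volume (ball (0 : EuclideanSpace ℝ (Fin d)) 1) := by
  rw [Measure.addHaar_closedBall volume c hs, finrank_euclideanSpace_fin]

lemma sz_cap_vol_le (d : ℕ) {r : ℝ} (hr0 : 0 ≤ r) (x : EuclideanSpace ℝ (Fin d)) :
    volume ({y : EuclideanSpace ℝ (Fin d) | ‖y‖^2 ≤ (inner ℝ x y : ℝ)} ∩
        (closedBall 0 1 \ closedBall 0 r)) ≤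
      ENNReal.ofReal ((‖x‖^d - r^d)/2^d) *
        volume (ball (0 : EuclideanSpace ℝ (Fin d)) 1) := by
  set S := {y : EuclideanSpace ℝ (Fin d) | ‖y‖^2 ≤ (inner ℝ x y : ℝ)} with hS
  set L : Set (EuclideanSpace ℝ (Fin d)) := closedBall 0 1 \ closedBall 0 r with hL
  have hSball : S = closedBall ((2:ℝ)⁻¹ • x) (‖x‖/2) := sz_ball_eq d x
  have hSsub : ∀ y ∈ S, ‖y‖ ≤ ‖x‖ := by
    intro y hy
    rw [hSball, mem_closedBall, dist_eq_norm] at hy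
    calc ‖y‖ = ‖(y - (2:ℝ)⁻¹ • x) + (2:ℝ)⁻¹ • x‖ := by rw [sub_add_cancel]
    _ ≤ ‖y - (2:ℝ)⁻¹ • x‖ + ‖(2:ℝ)⁻¹ • x‖ := norm_add_le _ _
    _ ≤ ‖x‖/2 + ‖x‖/2 := by
        refine add_le_add hy ?_
        rw [norm_smul, Real.norm_eq_abs, abs_of_nonneg (by norm_num : (0:ℝ) ≤ 2⁻¹)]
        linarith
    _ = ‖x‖ := by ring
  by_cases hxr : ‖x‖ ≤ r
  · have hempty : S ∩ L = ∅ := by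
      ext y
      simp only [mem_inter_iff, mem_empty_iff_false, iff_false, not_and, hL, mem_diff,
        mem_closedBall, dist_zero_right, not_and, not_not]
      intro hy _
      exact le_trans (hSsub y hy) hxr
    rw [hempty]
    simp
  · push_neg at hxr
    have hs0 : 0 < ‖x‖ := lt_of_le_of_lt hr0 hxr
    set s := ‖x‖ with hs
    set w : EuclideanSpace ℝ (Fin d) := (r/(2*s)) • x with hw
    have hwn : ‖w‖ = r/2 := by
      rw [hw, norm_smul, Real.norm_eq_abs, abs_of_nonneg (by positivity), ← hs]
      field_simp
    have h2 : closedBall w (r/2) ⊆ closedBall (0 : EuclideanSpace ℝ (Fin d)) r := by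
      intro y hy
      rw [mem_closedBall, dist_eq_norm] at hy ⊢
      rw [sub_zero]
      calc ‖y‖ = ‖(y - w) + w‖ := by rw [sub_add_cancel]
      _ ≤ ‖y - w‖ + ‖w‖ := norm_add_le _ _
      _ ≤ r/2 + r/2 := add_le_add hy (le_of_eq hwn)
      _ = r := by ring
    have h3 : closedBall w (r/2) ⊆ closedBall ((2:ℝ)⁻¹ • x) (s/2) := by
      intro y hy
      rw [mem_closedBall, dist_eq_norm] at hy ⊢
      have hwx : ‖w - (2:ℝ)⁻¹ • x‖ = (s - r)/2 := by
        rw [hw, ← sub_smul, norm_smul, Real.norm_eq_abs, ← hs]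
        rw [abs_of_nonpos ?_]
        · field_simp
          ring
        · rw [sub_nonpos, div_le_iff₀ (by positivity)]
          linarith
      have hysplit : y - (2:ℝ)⁻¹ • x = (y - w) + (w - (2:ℝ)⁻¹ • x) := by
        rw [sub_add_sub_cancel]
      rw [hysplit]
      calc ‖(y - w) + (w - (2:ℝ)⁻¹ • x)‖ ≤ ‖y - w‖ + ‖w - (2:ℝ)⁻¹ • x‖ := norm_add_le _ _
      _ ≤ r/2 + (s - r)/2 := add_le_add hy (le_of_eq hwx)
      _ = s/2 := by ring
    have hdisj : Disjoint (S ∩ L) (closedBall w (r/2)) := by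
      rw [Set.disjoint_left]
      intro y hy hy2
      have h5 := h2 hy2
      rw [mem_closedBall, dist_zero_right] at h5
      have hyL : y ∈ L := hy.2
      simp only [hL, mem_diff, mem_closedBall, dist_zero_right] at hyL
      exact hyL.2 h5
    have hunion : (S ∩ L) ∪ closedBall w (r/2) ⊆ closedBall ((2:ℝ)⁻¹ • x) (s/2) := by
      refine Set.union_subset ?_ h3
      refine subset_trans Set.inter_subset_left ?_
      rw [hSball]
    have hmeas : volume (S ∩ L) + volume (closedBall w (r/2)) ≤
        volume (closedBall ((2:ℝ)⁻¹ • x) (s/2)) := by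
      rw [← measure_union hdisj measurableSet_closedBall]
      exact measure_mono hunion
    rw [sz_vol_cb d _ (by positivity : (0:ℝ) ≤ r/2),
      sz_vol_cb d _ (by positivity : (0:ℝ) ≤ s/2)] at hmeas
    have hle : r^d ≤ s^d := pow_le_pow_left₀ hr0 hxr.le d
    have hsplit : ENNReal.ofReal ((s/2) ^ d) = ENNReal.ofReal ((s^d - r^d)/2^d) +
        ENNReal.ofReal ((r/2) ^ d) := by
      rw [← ENNReal.ofReal_add (div_nonneg (sub_nonneg.mpr hle) (by positivity)) (by positivity)]
      congr 1
      rw [div_pow, div_pow, ← add_div, sub_add_cancel]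
    rw [hsplit, add_mul] at hmeas
    have hfin : ENNReal.ofReal ((r/2) ^ d) *
        volume (ball (0 : EuclideanSpace ℝ (Fin d)) 1) ≠ ⊤ :=
      ENNReal.mul_ne_top ENNReal.ofReal_ne_top measure_ball_lt_top.ne
    exact (ENNReal.add_le_add_iff_right hfin).mp hmeas

lemma sz_vol_layer (d : ℕ) {r : ℝ} (hr0 : 0 ≤ r) (hr1 : r ≤ 1) :
    volume ((closedBall (0 : EuclideanSpace ℝ (Fin d)) 1) \ closedBall 0 r) =
      ENNReal.ofReal (1 - r ^ d) * volume (ball (0 : EuclideanSpace ℝ (Fin d)) 1) := by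
  have hsub : closedBall (0 : EuclideanSpace ℝ (Fin d)) r ⊆ closedBall 0 1 :=
    closedBall_subset_closedBall hr1
  rw [measure_diff hsub measurableSet_closedBall.nullMeasurableSet
    (measure_closedBall_lt_top).ne, sz_vol_cb d _ hr0, sz_vol_cb d _ (zero_le_one),
    one_pow, ENNReal.ofReal_one, one_mul]
  rw [ENNReal.ofReal_sub _ (by positivity), ENNReal.ofReal_one,
    ENNReal.sub_mul (fun _ _ => measure_ball_lt_top.ne), one_mul]

lemma sz_moment (d : ℕ) (hd : 0 < d) {r : ℝ} (hr0 : 0 ≤ r) (hr1 : r ≤ 1) :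
    ∫⁻ x in (closedBall (0 : EuclideanSpace ℝ (Fin d)) 1 \ closedBall 0 r),
        ENNReal.ofReal (‖x‖ ^ d) ∂volume =
      volume (closedBall (0 : EuclideanSpace ℝ (Fin d)) 1 \ closedBall 0 r) *
        ENNReal.ofReal ((1 + r ^ d) / 2) := by
  set L : Set (EuclideanSpace ℝ (Fin d)) := closedBall 0 1 \ closedBall 0 r with hL
  set VB := volume (ball (0 : EuclideanSpace ℝ (Fin d)) 1) with hVB
  have hVBne : VB ≠ ⊤ := measure_ball_lt_top.ne
  have hdR : (1:ℝ) ≤ (d:ℝ) := by exact_mod_cast hd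
  have hρ1 : (0:ℝ) ≤ 1 - r ^ d := sub_nonneg.mpr (pow_le_one₀ hr0 hr1)
  have hmbleset : ∀ t : ℝ, MeasurableSet {a : EuclideanSpace ℝ (Fin d) | t < ‖a‖} :=
    fun t => measurableSet_lt measurable_const measurable_norm
  -- rewrite integrand as rpow
  have hrpow : ∫⁻ x in L, ENNReal.ofReal (‖x‖ ^ d) ∂volume =
      ∫⁻ x in L, ENNReal.ofReal (‖x‖ ^ (d:ℝ)) ∂volume := by
    congr 1 with x
    rw [Real.rpow_natCast]
  rw [hrpow]
  rw [lintegral_rpow_eq_lintegral_meas_lt_mul (volume.restrict L)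
    (Filter.Eventually.of_forall fun x => norm_nonneg x) measurable_norm.aemeasurable
    (by exact_mod_cast hd : (0:ℝ) < (d:ℝ))]
  -- split the domain
  have hsplit : (Ioi (0:ℝ)) = (Ioc 0 r ∪ Ioc r 1) ∪ Ioi 1 := by
    rw [Set.Ioc_union_Ioc_eq_Ioc hr0 hr1, Set.Ioc_union_Ioi_eq_Ioi zero_le_one]
  have hdisj2 : Disjoint (Ioc (0:ℝ) r) (Ioc r 1) := Set.Ioc_disjoint_Ioc_of_le le_rfl
  have hdisj1 : Disjoint (Ioc (0:ℝ) r ∪ Ioc r 1) (Ioi 1) := by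
    rw [Set.disjoint_left]
    rintro t (ht | ht) ht1 <;> simp only [mem_Ioc, mem_Ioi] at * <;> linarith [ht.2]
  rw [hsplit, lintegral_union measurableSet_Ioi hdisj1,
    lintegral_union measurableSet_Ioc hdisj2]
  -- piece C
  have hC : ∫⁻ t in Ioi (1:ℝ),
      (volume.restrict L) {a | t < ‖a‖} * ENNReal.ofReal (t ^ ((d:ℝ) - 1)) = 0 := by
    rw [setLIntegral_congr_fun measurableSet_Ioi
      (fun t ht => ?_), lintegral_zero]
    have : {a : EuclideanSpace ℝ (Fin d) | t < ‖a‖} ∩ L = ∅ := by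
      apply Set.eq_empty_iff_forall_notMem.mpr
      rintro a ⟨h1, ha1, -⟩
      rw [mem_closedBall, dist_zero_right] at ha1
      rw [mem_Ioi] at ht
      exact absurd (lt_of_lt_of_le (lt_trans ht h1) ha1) (lt_irrefl 1)
    rw [Measure.restrict_apply (hmbleset t), this, measure_empty, zero_mul]
  -- piece A
  have hA : ∫⁻ t in Ioc (0:ℝ) r,
      (volume.restrict L) {a | t < ‖a‖} * ENNReal.ofReal (t ^ ((d:ℝ) - 1)) =
      ENNReal.ofReal (1 - r ^ d) * VB * ENNReal.ofReal (r ^ d / d) := by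
    have hcong : ∀ t ∈ Ioc (0:ℝ) r,
        (volume.restrict L) {a | t < ‖a‖} * ENNReal.ofReal (t ^ ((d:ℝ) - 1)) =
        (ENNReal.ofReal (1 - r ^ d) * VB) * ENNReal.ofReal (t ^ ((d:ℝ) - 1)) := by
      intro t ht
      congr 1
      rw [Measure.restrict_apply (hmbleset t)]
      have : {a : EuclideanSpace ℝ (Fin d) | t < ‖a‖} ∩ L = L := by
        apply Set.inter_eq_self_of_subset_right
        intro a ha
        simp only [hL, mem_diff, mem_closedBall, dist_zero_right] at ha
        have : r < ‖a‖ := not_le.mp ha.2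
        exact lt_of_le_of_lt ht.2 this
      rw [this, hL, sz_vol_layer d hr0 hr1]
    rw [setLIntegral_congr_fun measurableSet_Ioc hcong,
      lintegral_const_mul' _ _ (ENNReal.mul_ne_top ENNReal.ofReal_ne_top hVBne)]
    congr 1
    rw [← ofReal_integral_eq_lintegral_ofReal
      ((intervalIntegral.intervalIntegrable_rpow' (by linarith : (-1:ℝ) < (d:ℝ)-1)).1)
      (by filter_upwards [ae_restrict_mem measurableSet_Ioc] with t ht
          exact Real.rpow_nonneg ht.1.le _)]
    congr 1
    rw [← intervalIntegral.integral_of_le hr0,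
      integral_rpow (Or.inl (by linarith : (-1:ℝ) < (d:ℝ)-1))]
    have he : (d:ℝ) - 1 + 1 = (d:ℝ) := by ring
    rw [he, Real.zero_rpow (by positivity : (d:ℝ) ≠ 0), Real.rpow_natCast]
    ring
  -- piece B
  have hB : ∫⁻ t in Ioc r (1:ℝ),
      (volume.restrict L) {a | t < ‖a‖} * ENNReal.ofReal (t ^ ((d:ℝ) - 1)) =
      VB * ENNReal.ofReal ((1 - r ^ d)^2 / (2 * d)) := by
    have hcong : ∀ t ∈ Ioc r (1:ℝ),
        (volume.restrict L) {a | t < ‖a‖} * ENNReal.ofReal (t ^ ((d:ℝ) - 1)) =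
        VB * ENNReal.ofReal ((1 - t ^ d) * t ^ (d - 1)) := by
      intro t ht
      have ht0 : 0 ≤ t := le_trans hr0 ht.1.le
      have hset : {a : EuclideanSpace ℝ (Fin d) | t < ‖a‖} ∩ L =
          closedBall (0 : EuclideanSpace ℝ (Fin d)) 1 \ closedBall 0 t := by
        ext a
        simp only [mem_inter_iff, mem_setOf_eq, hL, mem_diff, mem_closedBall, dist_zero_right]
        constructor
        · rintro ⟨h1, h2, _⟩
          exact ⟨h2, not_le.mpr h1⟩
        · rintro ⟨h1, h2⟩
          have := not_le.mp h2
          exact ⟨this, h1, not_le.mpr (lt_trans ht.1 this)⟩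
      rw [Measure.restrict_apply (hmbleset t), hset, sz_vol_layer d ht0 ht.2]
      have hrw : t ^ ((d:ℝ) - 1) = t ^ (d - 1) := by
        rw [show (d:ℝ) - 1 = ((d - 1 : ℕ) : ℝ) by
            rw [Nat.cast_sub hd]; norm_num, Real.rpow_natCast]
      rw [hrw, ENNReal.ofReal_mul (by
        exact sub_nonneg.mpr (pow_le_one₀ ht0 ht.2))]
      ring
    rw [setLIntegral_congr_fun measurableSet_Ioc hcong,
      lintegral_const_mul' _ _ hVBne]
    congr 1
    have hint : Integrable (fun t : ℝ => (1 - t ^ d) * t ^ (d - 1))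
        (volume.restrict (Ioc r 1)) := by
      apply Continuous.integrableOn_Ioc
      continuity
    rw [← ofReal_integral_eq_lintegral_ofReal hint
      (by filter_upwards [ae_restrict_mem measurableSet_Ioc] with t ht
          have ht0 : 0 ≤ t := le_trans hr0 ht.1.le
          exact mul_nonneg (sub_nonneg.mpr (pow_le_one₀ ht0 ht.2)) (pow_nonneg ht0 _))]
    congr 1
    rw [← intervalIntegral.integral_of_le hr1]
    have hpoly : ∀ t : ℝ, (1 - t ^ d) * t ^ (d - 1) = t ^ (d - 1) - t ^ (2 * d - 1) := by
      intro t
      rw [sub_mul, one_mul, ← pow_add]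
      congr 2
      omega
    simp_rw [hpoly]
    rw [intervalIntegral.integral_sub (intervalIntegral.intervalIntegrable_pow _)
      (intervalIntegral.intervalIntegrable_pow _), integral_pow, integral_pow]
    have e1 : d - 1 + 1 = d := by omega
    have e2 : 2 * d - 1 + 1 = 2 * d := by omega
    rw [e1, e2, one_pow, one_pow]
    have c1 : ((d - 1 : ℕ) : ℝ) + 1 = (d : ℝ) := by
      rw [Nat.cast_sub hd]; norm_num
    have c2 : ((2 * d - 1 : ℕ) : ℝ) + 1 = 2 * (d : ℝ) := by
      rw [Nat.cast_sub (by omega : 1 ≤ 2 * d)]; push_cast; ring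
    rw [c1, c2, show 2 * d = d * 2 by omega, pow_mul]
    have hdne : (d:ℝ) ≠ 0 := by positivity
    field_simp
    ring
  rw [hA, hB, hC, add_zero]
  -- final algebra
  have hcomb : ENNReal.ofReal (1 - r ^ d) * VB * ENNReal.ofReal (r ^ d / d) +
      VB * ENNReal.ofReal ((1 - r ^ d) ^ 2 / (2 * d)) =
      VB * ENNReal.ofReal ((1 - r ^ d) * (r ^ d / d) + (1 - r ^ d) ^ 2 / (2 * d)) := by
    rw [ENNReal.ofReal_add (mul_nonneg hρ1 (by positivity)) (by positivity),
      ENNReal.ofReal_mul hρ1]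
    ring
  rw [hcomb, ← mul_assoc, mul_comm (ENNReal.ofReal (d:ℝ)) VB, mul_assoc,
    ← ENNReal.ofReal_mul (by positivity : (0:ℝ) ≤ (d:ℝ))]
  rw [hL, sz_vol_layer d hr0 hr1, mul_assoc, mul_comm VB (ENNReal.ofReal ((1 + r^d)/2)),
    ← mul_assoc, ← ENNReal.ofReal_mul hρ1, mul_comm (ENNReal.ofReal _) VB]
  congr 2
  have hdne : (d:ℝ) ≠ 0 := by positivity
  field_simp
  ring

lemma sz_sep (d n : ℕ) (X : Fin (n+1) → EuclideanSpace ℝ (Fin d))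
    (h : X (Fin.last n) ∈ convexHull ℝ (Set.range fun i : Fin n => X i.castSucc)) :
    ∃ i : Fin n, ‖X (Fin.last n)‖^2 ≤ (inner ℝ (X i.castSucc) (X (Fin.last n)) : ℝ) := by
  by_contra hc
  push_neg at hc
  have hconv : convexHull ℝ (Set.range fun i : Fin n => X i.castSucc) ⊆
      {z : EuclideanSpace ℝ (Fin d) | (inner ℝ z (X (Fin.last n)) : ℝ) < ‖X (Fin.last n)‖^2} := by
    apply convexHull_min
    · rintro z ⟨i, rfl⟩
      exact hc i
    · have hlin : IsLinearMap ℝ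
          (fun z : EuclideanSpace ℝ (Fin d) => (inner ℝ z (X (Fin.last n)) : ℝ)) :=
        ⟨fun a b => inner_add_left _ _ _, fun c a => real_inner_smul_left _ _ _⟩
      exact convex_halfSpace_lt hlin _
  have h2 := hconv h
  rw [mem_setOf_eq, real_inner_self_eq_norm_sq] at h2
  exact lt_irrefl _ h2

lemma sz_map_eval {E' : Type*} [MeasurableSpace E'] (n : ℕ) (μ : Measure E')
    [IsProbabilityMeasure μ] (i : Fin n) :
    Measure.map (fun Z : Fin n → E' => Z i) (Measure.pi fun _ => μ) = μ := by
  ext s hs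
  rw [Measure.map_apply (measurable_pi_apply i) hs]
  have hpre : (fun Z : Fin n → E' => Z i) ⁻¹' s =
      Set.pi univ (Function.update (fun _ => univ) i s) := Set.eval_preimage
  rw [hpre, Measure.pi_pi]
  rw [Finset.prod_eq_single i (fun j _ hj => by simp [Function.update_of_ne hj])
    (fun hni => absurd (Finset.mem_univ i) hni)]
  simp

/-- **Theorem 1 (Sidorov–Zolotykh).** For a random point `Y` and random points
`X_1, …, X_n` drawn independently and uniformly from the spherical layer
`B_d \ rB_d` (`0 ≤ r < 1`), the probability that `Y` is linearly separable from
`{X_1, …, X_n}` (i.e. `Y ∉ conv(X_1, …, X_n)`) is greater than `1 - n / 2^d`;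
equivalently, the set of tuples with `Y ∈ conv(X_1, …, X_n)` has probability
less than `n / 2^d`. -/
theorem random_point_linearly_separable_from_random_set
    (d : ℕ) (hd : 0 < d) (n : ℕ) (hn : 0 < n) (r : ℝ) (hr0 : 0 ≤ r) (hr1 : r < 1) :
    ∀ μ : Measure (EuclideanSpace ℝ (Fin d)),
      μ = (volume (closedBall (0 : EuclideanSpace ℝ (Fin d)) 1 \ closedBall 0 r))⁻¹ •
        volume.restrict (closedBall (0 : EuclideanSpace ℝ (Fin d)) 1 \ closedBall 0 r) →
      (1 - (n : ℝ) / 2 ^ d <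
          ((Measure.pi fun _ : Fin (n + 1) => μ)
            {X | X (Fin.last n) ∉
              convexHull ℝ (Set.range fun i : Fin n => X i.castSucc)}).toReal
        ∧ (Measure.pi fun _ : Fin (n + 1) => μ)
            {X | X (Fin.last n) ∈
              convexHull ℝ (Set.range fun i : Fin n => X i.castSucc)}
            < (n : ℝ≥0∞) / 2 ^ d) := by
  intro μ hμ
  set L : Set (EuclideanSpace ℝ (Fin d)) := closedBall 0 1 \ closedBall 0 r with hLdef
  have hLmeas : MeasurableSet L := measurableSet_closedBall.diff measurableSet_closedBall
  set VB := volume (ball (0 : EuclideanSpace ℝ (Fin d)) 1) with hVBdef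
  have hVB0 : VB ≠ 0 := (measure_ball_pos volume _ one_pos).ne'
  have hVBt : VB ≠ ⊤ := measure_ball_lt_top.ne
  have hρ0 : (0:ℝ) ≤ r ^ d := by positivity
  have hρ1 : r ^ d < 1 := pow_lt_one₀ hr0 hr1 hd.ne'
  have hvolL : volume L = ENNReal.ofReal (1 - r ^ d) * VB := sz_vol_layer d hr0 hr1.le
  have hor0 : (ENNReal.ofReal (1 - r ^ d)) ≠ 0 :=
    (ENNReal.ofReal_pos.mpr (by linarith)).ne'
  have hLne0 : volume L ≠ 0 := by
    rw [hvolL]; exact mul_ne_zero hor0 hVB0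
  have hLnet : volume L ≠ ⊤ := by
    rw [hvolL]; exact ENNReal.mul_ne_top ENNReal.ofReal_ne_top hVBt
  haveI hprob : IsProbabilityMeasure μ := by
    constructor
    rw [hμ, Measure.smul_apply, Measure.restrict_apply_univ, smul_eq_mul,
      ENNReal.inv_mul_cancel hLne0 hLnet]
  -- constant C and per-point bound
  set C : ℝ≥0∞ := (volume L)⁻¹ * VB * (ENNReal.ofReal ((2:ℝ)^d))⁻¹ with hCdef
  have hCne : C ≠ ⊤ := by
    rw [hCdef]
    exact ENNReal.mul_ne_top (ENNReal.mul_ne_top (ENNReal.inv_ne_top.mpr hLne0) hVBt)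
      (ENNReal.inv_ne_top.mpr ((ENNReal.ofReal_pos.mpr (by positivity)).ne'))
  have hcapμ : ∀ x : EuclideanSpace ℝ (Fin d),
      μ {y | ‖y‖^2 ≤ (inner ℝ x y : ℝ)} ≤ C * ENNReal.ofReal (‖x‖^d - r^d) := by
    intro x
    rw [hμ, Measure.smul_apply, smul_eq_mul]
    have hmeasS : MeasurableSet {y : EuclideanSpace ℝ (Fin d) | ‖y‖^2 ≤ (inner ℝ x y : ℝ)} := by
      rw [sz_ball_eq d x]; exact measurableSet_closedBall
    rw [Measure.restrict_apply hmeasS]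
    calc (volume L)⁻¹ * volume ({y | ‖y‖^2 ≤ (inner ℝ x y : ℝ)} ∩ L)
        ≤ (volume L)⁻¹ * (ENNReal.ofReal ((‖x‖^d - r^d)/2^d) * VB) :=
          mul_le_mul_right (sz_cap_vol_le d hr0 x) _
      _ = C * ENNReal.ofReal (‖x‖^d - r^d) := by
          rw [ENNReal.ofReal_div_of_pos (by positivity : (0:ℝ) < 2^d), hCdef]
          rw [ENNReal.div_eq_inv_mul]
          ring
  -- the moment computation
  have hMμ : ∫⁻ x, ENNReal.ofReal (‖x‖^d) ∂μ = ENNReal.ofReal ((1 + r^d)/2) := by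
    rw [hμ, lintegral_smul_measure]
    rw [show ∫⁻ x, ENNReal.ofReal (‖x‖^d) ∂(volume.restrict L) =
        ∫⁻ x in L, ENNReal.ofReal (‖x‖^d) ∂volume from rfl]
    rw [sz_moment d hd hr0 hr1.le, ← hLdef, smul_eq_mul, ← mul_assoc,
      ENNReal.inv_mul_cancel hLne0 hLnet, one_mul]
  have haeL : ∀ᵐ x ∂μ, ENNReal.ofReal (r^d) ≤ ENNReal.ofReal (‖x‖^d) := by
    rw [hμ]
    apply Measure.ae_smul_measure
    filter_upwards [ae_restrict_mem hLmeas] with x hx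
    have : r < ‖x‖ := by
      have := hx.2
      rw [mem_closedBall, dist_zero_right] at this
      exact not_le.mp this
    exact ENNReal.ofReal_le_ofReal (pow_le_pow_left₀ hr0 this.le d)
  have hsubint : ∫⁻ x, ENNReal.ofReal (‖x‖^d - r^d) ∂μ = ENNReal.ofReal ((1 - r^d)/2) := by
    have hpt : ∀ x : EuclideanSpace ℝ (Fin d), ENNReal.ofReal (‖x‖^d - r^d) =
        ENNReal.ofReal (‖x‖^d) - ENNReal.ofReal (r^d) := fun x => ENNReal.ofReal_sub _ hρ0
    simp_rw [hpt]
    rw [lintegral_sub measurable_const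
      (by rw [lintegral_const, measure_univ, mul_one]; exact ENNReal.ofReal_ne_top) haeL]
    rw [hMμ, lintegral_const, measure_univ, mul_one, ← ENNReal.ofReal_sub _ hρ0]
    congr 1
    ring
  -- the events
  set A : Set (Fin (n+1) → EuclideanSpace ℝ (Fin d)) :=
    {X | X (Fin.last n) ∈ convexHull ℝ (Set.range fun i : Fin n => X i.castSucc)} with hAdef
  set As : Fin n → Set (Fin (n+1) → EuclideanSpace ℝ (Fin d)) :=
    fun i => {X | ‖X (Fin.last n)‖^2 ≤ (inner ℝ (X i.castSucc) (X (Fin.last n)) : ℝ)} with hAsdef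
  have hAsub : A ⊆ ⋃ i, As i := by
    intro X hX
    obtain ⟨i, hi⟩ := sz_sep d n X hX
    exact mem_iUnion.mpr ⟨i, hi⟩
  set P1 := Measure.pi (fun _ : Fin (n+1) => μ) with hP1def
  set Pn := Measure.pi (fun _ : Fin n => μ) with hPndef
  -- bound on each As i
  have hAi : ∀ i : Fin n, P1 (As i) ≤ ((2:ℝ≥0∞)^d)⁻¹ * 2⁻¹ := by
    intro i
    set e := MeasurableEquiv.piFinSuccAbove (fun _ : Fin (n+1) => EuclideanSpace ℝ (Fin d))
      (Fin.last n) with hedef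
    set B : Set ((EuclideanSpace ℝ (Fin d)) × (Fin n → EuclideanSpace ℝ (Fin d))) :=
      {p | ‖p.1‖^2 ≤ (inner ℝ (p.2 i) p.1 : ℝ)} with hBdef
    have hBmeas : MeasurableSet B := by
      apply measurableSet_le
      · exact (measurable_fst.norm).pow_const 2
      · exact (Continuous.inner ((continuous_apply i).comp continuous_snd)
          continuous_fst).measurable
    have hAeq : As i = e ⁻¹' B := by
      ext X
      simp only [hAsdef, mem_setOf_eq, mem_preimage, hBdef, hedef,
        MeasurableEquiv.piFinSuccAbove_apply, Fin.insertNthEquiv_symm_apply, Fin.removeNth,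
        Fin.succAbove_last]
    have hpres := measurePreserving_piFinSuccAbove (fun _ : Fin (n+1) => μ) (Fin.last n)
    have h1 : P1 (As i) = (μ.prod Pn) B := by
      rw [hAeq, hP1def, hPndef]
      exact hpres.measure_preimage hBmeas.nullMeasurableSet
    have h2 : (μ.prod Pn) B = ∫⁻ Z, μ {y | ‖y‖^2 ≤ (inner ℝ (Z i) y : ℝ)} ∂Pn := by
      rw [Measure.prod_apply_symm hBmeas]
      rfl
    have hg : Measurable (fun x : EuclideanSpace ℝ (Fin d) =>
        C * ENNReal.ofReal (‖x‖^d - r^d)) :=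
      (((measurable_norm.pow_const d).sub_const _).ennreal_ofReal).const_mul C
    have h3 : ∫⁻ Z, μ {y | ‖y‖^2 ≤ (inner ℝ (Z i) y : ℝ)} ∂Pn ≤
        ∫⁻ Z, C * ENNReal.ofReal (‖Z i‖^d - r^d) ∂Pn :=
      lintegral_mono fun Z => hcapμ (Z i)
    have h4 : ∫⁻ Z, C * ENNReal.ofReal (‖Z i‖^d - r^d) ∂Pn =
        ∫⁻ x, C * ENNReal.ofReal (‖x‖^d - r^d) ∂μ := by
      conv_rhs => rw [← sz_map_eval n μ i]
      rw [lintegral_map hg (measurable_pi_apply i)]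
    have h5 : ∫⁻ x, C * ENNReal.ofReal (‖x‖^d - r^d) ∂μ = C * ENNReal.ofReal ((1 - r^d)/2) := by
      rw [lintegral_const_mul' _ _ hCne, hsubint]
    have h6 : C * ENNReal.ofReal ((1 - r^d)/2) = ((2:ℝ≥0∞)^d)⁻¹ * 2⁻¹ := by
      rw [hCdef, hvolL, ENNReal.mul_inv (Or.inl hor0) (Or.inl ENNReal.ofReal_ne_top)]
      rw [show (1 - r^d)/2 = (1 - r^d) * (1/2) by ring,
        ENNReal.ofReal_mul (by linarith : (0:ℝ) ≤ 1 - r^d)]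
      calc (ENNReal.ofReal (1 - r ^ d))⁻¹ * VB⁻¹ * VB * (ENNReal.ofReal ((2:ℝ)^d))⁻¹ *
            (ENNReal.ofReal (1 - r ^ d) * ENNReal.ofReal (1/2))
          = ((ENNReal.ofReal (1 - r ^ d))⁻¹ * ENNReal.ofReal (1 - r ^ d)) * (VB⁻¹ * VB) *
            ((ENNReal.ofReal ((2:ℝ)^d))⁻¹ * ENNReal.ofReal (1/2)) := by ring
        _ = ((2:ℝ≥0∞)^d)⁻¹ * 2⁻¹ := by
            rw [ENNReal.inv_mul_cancel hor0 ENNReal.ofReal_ne_top,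
              ENNReal.inv_mul_cancel hVB0 hVBt, one_mul, one_mul]
            congr 1
            · congr 1
              rw [ENNReal.ofReal_pow (by norm_num : (0:ℝ) ≤ 2)]
              norm_num
            · rw [show (1:ℝ)/2 = (2:ℝ)⁻¹ by norm_num,
                ENNReal.ofReal_inv_of_pos (by norm_num : (0:ℝ) < 2)]
              norm_num
    calc P1 (As i) = (μ.prod Pn) B := h1
      _ = ∫⁻ Z, μ {y | ‖y‖^2 ≤ (inner ℝ (Z i) y : ℝ)} ∂Pn := h2
      _ ≤ ∫⁻ Z, C * ENNReal.ofReal (‖Z i‖^d - r^d) ∂Pn := h3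
      _ = C * ENNReal.ofReal ((1 - r^d)/2) := by rw [h4, h5]
      _ = ((2:ℝ≥0∞)^d)⁻¹ * 2⁻¹ := h6
  -- total bound
  have hmain : P1 A < (n : ℝ≥0∞) / 2^d := by
    have hle : P1 A ≤ (n : ℝ≥0∞) * (((2:ℝ≥0∞)^d)⁻¹ * 2⁻¹) := by
      calc P1 A ≤ P1 (⋃ i, As i) := measure_mono hAsub
        _ ≤ ∑' i : Fin n, P1 (As i) := measure_iUnion_le _
        _ ≤ ∑' _ : Fin n, ((2:ℝ≥0∞)^d)⁻¹ * 2⁻¹ := ENNReal.tsum_le_tsum hAi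
        _ = (n : ℝ≥0∞) * (((2:ℝ≥0∞)^d)⁻¹ * 2⁻¹) := by
            rw [tsum_fintype]
            simp [Finset.sum_const, Finset.card_univ, nsmul_eq_mul]
    refine lt_of_le_of_lt hle ?_
    rw [div_eq_mul_inv]
    have hn0 : (n : ℝ≥0∞) ≠ 0 := Nat.cast_ne_zero.mpr hn.ne'
    refine ENNReal.mul_lt_mul_right hn0 (natCast_ne_top n) ?_
    have h20 : ((2:ℝ≥0∞)^d)⁻¹ ≠ 0 :=
      ENNReal.inv_ne_zero.mpr (ENNReal.pow_ne_top (by norm_num))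
    have h2t : ((2:ℝ≥0∞)^d)⁻¹ ≠ ⊤ :=
      ENNReal.inv_ne_top.mpr (pow_ne_zero d (by norm_num))
    have := ENNReal.half_lt_self h20 h2t
    rwa [ENNReal.div_eq_inv_mul, mul_comm] at this
  constructor
  · -- first conjunct from the second
    have hAfin : P1 A ≠ ⊤ := (measure_lt_top _ _).ne
    have hcfin : P1 Aᶜ ≠ ⊤ := (measure_lt_top _ _).ne
    have hun : (1:ℝ≥0∞) ≤ P1 A + P1 Aᶜ := by
      rw [show (1:ℝ≥0∞) = P1 univ from (measure_univ).symm, ← Set.union_compl_self A]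
      exact measure_union_le _ _
    have hreal1 : (1:ℝ) ≤ (P1 A).toReal + (P1 Aᶜ).toReal := by
      have := ENNReal.toReal_mono (by
        exact ENNReal.add_ne_top.mpr ⟨hAfin, hcfin⟩) hun
      rwa [ENNReal.toReal_one, ENNReal.toReal_add hAfin hcfin] at this
    have hreal2 : (P1 A).toReal < (n:ℝ) / 2^d := by
      have ht : ((n : ℝ≥0∞) / 2^d).toReal = (n:ℝ)/2^d := by
        rw [ENNReal.toReal_div]
        simp
      have := ENNReal.toReal_lt_toReal hAfin
        (ENNReal.div_lt_top (natCast_ne_top n) (pow_ne_zero d (by norm_num))).ne |>.mpr hmain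
      rwa [ht] at this
    have : {X | X (Fin.last n) ∉
        convexHull ℝ (Set.range fun i : Fin n => X i.castSucc)} = Aᶜ := rfl
    rw [this]
    linarith
  · exact hmain
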